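/- Every countable binary hypothesis class H = {h_1, h_2, ...} over a countable domain, with every supp(h_i) infinite, is generatable in the limit with replay: there exists a generator G such that for every h* ∈ H and every infinite sequence (x_t) in which each x_t lies in supp(h*) or equals an earlier output of G, and which eventually contains every element of supp(h*), there is a finite t* with G(x_1,...,x_s) ∈ supp(h*) \ {x_1,...,x_s} for all s ≥ t*. -/
import Mathlib


def Out {X : Type*} (G : List X → X) (x : ℕ → X) (s : ℕ) : X :=
  G ((List.range s).map x)

def ReplaySeq {X : Type*} (h : Set X) (G : List X → X) (x : ℕ → X) : Prop :=
  ∀ t, x t ∈ h ∨ ∃ s, 1 ≤ s ∧ s ≤ t ∧ x t = Out G x s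

namespace Statement14

variable {X : Type*}

/-- Seen-or-output set at time `t` (given stream `x` and history `p` of (level, output) pairs). -/
def VR (x : ℕ → X) (p : ℕ → ℕ × X) (t : ℕ) : Set X :=
  {a | (∃ r < t, a = x r) ∨ (∃ s < t, a = (p s).2)}

/-- Consistency with excuses: every stream element so far is in `hyp j` or is a replayed output. -/
def ConsR (hyp : ℕ → Set X) (x : ℕ → X) (p : ℕ → ℕ × X) (t j : ℕ) : Prop :=
  ∀ r < t, x r ∈ hyp j ∨ ∃ s, 1 ≤ s ∧ s ≤ r ∧ x r = (p s).2

/-- Punishment counter: times the level was ≤ j. -/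
def betaR (p : ℕ → ℕ × X) (t j : ℕ) : ℕ :=
  ((Finset.range t).filter (fun s => (p s).1 ≤ j)).card

/-- Coverage demand: the first `betaR` elements of `hyp j` (in the enumeration `e`) appeared. -/
def CovR (hyp : ℕ → Set X) (e : ℕ → X) (x : ℕ → X) (p : ℕ → ℕ × X) (t j : ℕ) : Prop :=
  ∀ m < betaR p t j, e m ∈ hyp j → e m ∈ VR x p t

def QR (hyp : ℕ → Set X) (e : ℕ → X) (x : ℕ → X) (p : ℕ → ℕ × X) (t j : ℕ) : Prop :=
  ConsR hyp x p t j ∧ CovR hyp e x p t j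

def IR (hyp : ℕ → Set X) (e : ℕ → X) (x : ℕ → X) (p : ℕ → ℕ × X) (t g : ℕ) : Set X :=
  {a | ∀ j < g, QR hyp e x p t j → a ∈ hyp j}

def okR (hyp : ℕ → Set X) (e : ℕ → X) (x : ℕ → X) (p : ℕ → ℕ × X) (t g : ℕ) : Prop :=
  (IR hyp e x p t g \ VR x p t).Nonempty

noncomputable def gR (hyp : ℕ → Set X) (e : ℕ → X) (x : ℕ → X) (p : ℕ → ℕ × X) (t : ℕ) : ℕ :=
  @Nat.findGreatest (okR hyp e x p t) (Classical.decPred _) t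

noncomputable def oR (hyp : ℕ → Set X) (e : ℕ → X) (d0 : X) (x : ℕ → X) (p : ℕ → ℕ × X)
    (t : ℕ) : X :=
  @dite _ (okR hyp e x p t (gR hyp e x p t)) (Classical.dec _) (fun h => h.some) (fun _ => d0)

noncomputable def stepR (hyp : ℕ → Set X) (e : ℕ → X) (d0 : X) (x : ℕ → X) (p : ℕ → ℕ × X)
    (t : ℕ) : ℕ × X :=
  (gR hyp e x p t, oR hyp e d0 x p t)

noncomputable def dataR (hyp : ℕ → Set X) (e : ℕ → X) (d0 : X) (x : ℕ → X) (t : ℕ) : ℕ × X :=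
  stepR hyp e d0 x (fun s => if _h : s < t then dataR hyp e d0 x s else (0, d0)) t
termination_by t

/-- The generator. -/
noncomputable def GG (hyp : ℕ → Set X) (e : ℕ → X) (d0 : X) : List X → X :=
  fun L => (dataR hyp e d0 (fun n => L.getD n d0) L.length).2


section Congr

variable {hyp : ℕ → Set X} {e : ℕ → X} {d0 : X} {x x' : ℕ → X} {p p' : ℕ → ℕ × X} {t : ℕ}

theorem fg_congr {P Q : ℕ → Prop} [DecidablePred P] [DecidablePred Q]
    (h : ∀ n, P n ↔ Q n) : ∀ b, Nat.findGreatest P b = Nat.findGreatest Q b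
  | 0 => rfl
  | (b+1) => by
    rw [Nat.findGreatest_succ, Nat.findGreatest_succ, fg_congr h b]
    by_cases hq : Q (b+1)
    · rw [if_pos ((h _).mpr hq), if_pos hq]
    · rw [if_neg (fun hp => hq ((h _).mp hp)), if_neg hq]

theorem VR_congr (hx : ∀ r < t, x r = x' r) (hp : ∀ s < t, p s = p' s) :
    VR x p t = VR x' p' t := by
  ext a
  simp only [VR, Set.mem_setOf_eq]
  constructor
  · rintro (⟨r, hr, rfl⟩ | ⟨s, hs, rfl⟩)
    · exact Or.inl ⟨r, hr, hx r hr⟩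
    · exact Or.inr ⟨s, hs, by rw [hp s hs]⟩
  · rintro (⟨r, hr, rfl⟩ | ⟨s, hs, rfl⟩)
    · exact Or.inl ⟨r, hr, (hx r hr).symm⟩
    · exact Or.inr ⟨s, hs, by rw [hp s hs]⟩

theorem ConsR_congr (hx : ∀ r < t, x r = x' r) (hp : ∀ s < t, p s = p' s) (j : ℕ) :
    ConsR hyp x p t j ↔ ConsR hyp x' p' t j := by
  unfold ConsR
  constructor
  · intro h r hr
    rw [← hx r hr]
    refine (h r hr).imp id ?_
    rintro ⟨s, h1, h2, h3⟩
    exact ⟨s, h1, h2, by rw [h3, hp s (lt_of_le_of_lt h2 hr)]⟩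
  · intro h r hr
    rw [hx r hr]
    refine (h r hr).imp id ?_
    rintro ⟨s, h1, h2, h3⟩
    exact ⟨s, h1, h2, by rw [h3, hp s (lt_of_le_of_lt h2 hr)]⟩

theorem betaR_congr (hp : ∀ s < t, p s = p' s) (j : ℕ) :
    betaR p t j = betaR p' t j := by
  unfold betaR
  congr 1
  refine Finset.filter_congr ?_
  intro s hs
  rw [hp s (Finset.mem_range.mp hs)]

theorem CovR_congr (hx : ∀ r < t, x r = x' r) (hp : ∀ s < t, p s = p' s) (j : ℕ) :
    CovR hyp e x p t j ↔ CovR hyp e x' p' t j := by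
  unfold CovR
  rw [betaR_congr hp j, VR_congr hx hp]

theorem QR_congr (hx : ∀ r < t, x r = x' r) (hp : ∀ s < t, p s = p' s) (j : ℕ) :
    QR hyp e x p t j ↔ QR hyp e x' p' t j := by
  unfold QR
  rw [ConsR_congr hx hp j, CovR_congr hx hp j]

theorem IR_congr (hx : ∀ r < t, x r = x' r) (hp : ∀ s < t, p s = p' s) (g : ℕ) :
    IR hyp e x p t g = IR hyp e x' p' t g := by
  ext a
  simp only [IR, Set.mem_setOf_eq]
  constructor
  · intro h j hj hq
    exact h j hj ((QR_congr hx hp j).mpr hq)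
  · intro h j hj hq
    exact h j hj ((QR_congr hx hp j).mp hq)

theorem okR_congr (hx : ∀ r < t, x r = x' r) (hp : ∀ s < t, p s = p' s) (g : ℕ) :
    okR hyp e x p t g ↔ okR hyp e x' p' t g := by
  unfold okR
  rw [IR_congr hx hp g, VR_congr hx hp]

theorem gR_congr (hx : ∀ r < t, x r = x' r) (hp : ∀ s < t, p s = p' s) :
    gR hyp e x p t = gR hyp e x' p' t := by
  unfold gR
  exact @fg_congr _ _ (Classical.decPred _) (Classical.decPred _) (okR_congr hx hp) t

theorem oR_congr (hx : ∀ r < t, x r = x' r) (hp : ∀ s < t, p s = p' s) :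
    oR hyp e d0 x p t = oR hyp e d0 x' p' t := by
  unfold oR
  have hg : gR hyp e x p t = gR hyp e x' p' t := gR_congr hx hp
  have hset : (IR hyp e x p t (gR hyp e x p t) \ VR x p t)
      = (IR hyp e x' p' t (gR hyp e x' p' t) \ VR x' p' t) := by
    rw [hg, IR_congr hx hp, VR_congr hx hp]
  unfold okR
  rw [hset]

theorem stepR_congr (hx : ∀ r < t, x r = x' r) (hp : ∀ s < t, p s = p' s) :
    stepR hyp e d0 x p t = stepR hyp e d0 x' p' t := by
  unfold stepR
  rw [gR_congr hx hp, oR_congr hx hp]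

end Congr

section Run

variable (hyp : ℕ → Set X) (e : ℕ → X) (d0 : X) (x : ℕ → X)

/-- the run history function -/
noncomputable def px : ℕ → ℕ × X := fun s => dataR hyp e d0 x s

noncomputable def gx (t : ℕ) : ℕ := (dataR hyp e d0 x t).1
noncomputable def ox (t : ℕ) : X := (dataR hyp e d0 x t).2

theorem dataR_run (t : ℕ) :
    dataR hyp e d0 x t = stepR hyp e d0 x (px hyp e d0 x) t := by
  rw [dataR]
  refine stepR_congr (fun r _ => rfl) ?_
  intro s hs
  simp [px, hs]

theorem gx_eq (t : ℕ) : gx hyp e d0 x t = gR hyp e x (px hyp e d0 x) t := by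
  unfold gx; rw [dataR_run]; rfl

theorem ox_eq (t : ℕ) : ox hyp e d0 x t = oR hyp e d0 x (px hyp e d0 x) t := by
  unfold ox; rw [dataR_run]; rfl

theorem dataR_congr_stream {x x' : ℕ → X} :
    ∀ t, (∀ r < t, x r = x' r) → dataR hyp e d0 x t = dataR hyp e d0 x' t := by
  intro t
  induction t using Nat.strong_induction_on with
  | _ t ih =>
    intro hx
    rw [dataR, dataR]
    refine stepR_congr hx ?_
    intro s hs
    simp only [hs, dite_true, dif_pos]
    exact ih s hs (fun r hr => hx r (lt_trans hr hs))

/-- The output of the generator on the actual prefix equals `ox`. -/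
theorem Out_eq (t : ℕ) : Out (GG hyp e d0) x t = ox hyp e d0 x t := by
  unfold Out GG ox
  have hlen : ((List.range t).map x).length = t := by simp
  rw [hlen]
  have : ∀ r < t, ((List.range t).map x).getD r d0 = x r := by
    intro r hr
    rw [List.getD_eq_getElem _ _ (by simpa using hr)]
    simp
  exact congrArg Prod.snd (dataR_congr_stream hyp e d0 t this)

end Run

section Spec

variable (hyp : ℕ → Set X) (e : ℕ → X) (d0 : X) (x : ℕ → X)

noncomputable def Vx (t : ℕ) : Set X := VR x (px hyp e d0 x) t
noncomputable def Consx (t j : ℕ) : Prop := ConsR hyp x (px hyp e d0 x) t j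
noncomputable def betax (t j : ℕ) : ℕ := betaR (px hyp e d0 x) t j
noncomputable def Covx (t j : ℕ) : Prop := CovR hyp e x (px hyp e d0 x) t j
noncomputable def Qx (t j : ℕ) : Prop := QR hyp e x (px hyp e d0 x) t j
noncomputable def Ixx (t g : ℕ) : Set X := IR hyp e x (px hyp e d0 x) t g
noncomputable def okx (t g : ℕ) : Prop := okR hyp e x (px hyp e d0 x) t g

theorem Qx_def (t j : ℕ) : Qx hyp e d0 x t j ↔ Consx hyp e d0 x t j ∧ Covx hyp e d0 x t j :=
  Iff.rfl

theorem mem_Vx (a : X) (t : ℕ) :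
    a ∈ Vx hyp e d0 x t ↔ (∃ r < t, a = x r) ∨ (∃ s < t, a = ox hyp e d0 x s) :=
  Iff.rfl

theorem Vx_fin (t : ℕ) : (Vx hyp e d0 x t).Finite := by
  have : Vx hyp e d0 x t ⊆ (x '' Set.Iio t) ∪ ((ox hyp e d0 x) '' Set.Iio t) := by
    intro a ha
    rcases (mem_Vx hyp e d0 x a t).mp ha with ⟨r, hr, rfl⟩ | ⟨s, hs, rfl⟩
    · exact Or.inl ⟨r, hr, rfl⟩
    · exact Or.inr ⟨s, hs, rfl⟩
  exact Set.Finite.subset (((Set.finite_Iio t).image x).union ((Set.finite_Iio t).image _)) this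

theorem Ixx_zero (t : ℕ) : Ixx hyp e d0 x t 0 = Set.univ := by
  ext a; simp [Ixx, IR]

theorem okx_zero [Infinite X] (t : ℕ) : okx hyp e d0 x t 0 := by
  unfold okx okR
  rw [show IR hyp e x (px hyp e d0 x) t 0 = Set.univ from Ixx_zero hyp e d0 x t]
  rw [show (Set.univ \ VR x (px hyp e d0 x) t) = (VR x (px hyp e d0 x) t)ᶜ from
    (Set.compl_eq_univ_diff _).symm]
  exact ((Vx_fin hyp e d0 x t).infinite_compl).nonempty

theorem gx_findGreatest (t : ℕ) :
    gx hyp e d0 x t = @Nat.findGreatest (okx hyp e d0 x t) (Classical.decPred _) t := by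
  rw [gx_eq]; rfl

theorem gx_le (t : ℕ) : gx hyp e d0 x t ≤ t := by
  rw [gx_findGreatest]; exact @Nat.findGreatest_le _ (Classical.decPred _) t

theorem okx_gx [Infinite X] (t : ℕ) : okx hyp e d0 x t (gx hyp e d0 x t) := by
  rw [gx_findGreatest]
  exact @Nat.findGreatest_spec _ _ (Classical.decPred _) _ (Nat.zero_le t) (okx_zero hyp e d0 x t)

theorem le_gx [Infinite X] {t g : ℕ} (hgt : g ≤ t) (h : okx hyp e d0 x t g) :
    g ≤ gx hyp e d0 x t := by
  rw [gx_findGreatest]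
  exact @Nat.le_findGreatest _ _ (Classical.decPred _) _ hgt h

theorem ox_mem [Infinite X] (t : ℕ) :
    ox hyp e d0 x t ∈ Ixx hyp e d0 x t (gx hyp e d0 x t) \ Vx hyp e d0 x t := by
  have hok : okR hyp e x (px hyp e d0 x) t (gR hyp e x (px hyp e d0 x) t) := by
    have := okx_gx hyp e d0 x t
    rwa [gx_eq] at this
  have hmem := hok.some_mem
  unfold Ixx Vx
  rw [gx_eq, ox_eq]
  unfold oR
  rw [dif_pos hok]
  exact hmem

theorem Vx_mono {t t' : ℕ} (h : t ≤ t') : Vx hyp e d0 x t ⊆ Vx hyp e d0 x t' := by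
  intro a ha
  rcases ha with ⟨r, hr, rfl⟩ | ⟨s, hs, rfl⟩
  · exact Or.inl ⟨r, lt_of_lt_of_le hr h, rfl⟩
  · exact Or.inr ⟨s, lt_of_lt_of_le hs h, rfl⟩

theorem Consx_anti {t t' j : ℕ} (h : t ≤ t') (hc : Consx hyp e d0 x t' j) :
    Consx hyp e d0 x t j := fun r hr => hc r (lt_of_lt_of_le hr h)

theorem betax_mono {t t' : ℕ} (j : ℕ) (h : t ≤ t') :
    betax hyp e d0 x t j ≤ betax hyp e d0 x t' j := by
  unfold betax betaR
  exact Finset.card_le_card (Finset.filter_subset_filter _ (Finset.range_subset_range.mpr h))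

/-- If the level never drops to ≤ j after T, the counter stabilizes. -/
theorem betax_stab {T j : ℕ} (hj : ∀ s, T ≤ s → j < gx hyp e d0 x s) :
    ∀ t, T ≤ t → betax hyp e d0 x t j = betax hyp e d0 x T j := by
  intro t ht
  unfold betax betaR
  congr 1
  apply Finset.ext
  intro s
  simp only [Finset.mem_filter, Finset.mem_range]
  constructor
  · rintro ⟨hs, hle⟩
    have hgx : (px hyp e d0 x s).1 = gx hyp e d0 x s := rfl
    rw [hgx] at hle
    by_contra hcon
    push_neg at hcon
    rcases lt_or_ge s T with h' | h'
    · exact absurd (hcon h') (by omega)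
    · exact absurd (hj s h') (by omega)
  · rintro ⟨hs, hle⟩
    exact ⟨lt_of_lt_of_le hs ht, hle⟩

theorem mem_Ixx (a : X) (t g : ℕ) :
    a ∈ Ixx hyp e d0 x t g ↔ ∀ j < g, Qx hyp e d0 x t j → a ∈ hyp j := Iff.rfl

theorem okx_def (t g : ℕ) :
    okx hyp e d0 x t g ↔ (Ixx hyp e d0 x t g \ Vx hyp e d0 x t).Nonempty := Iff.rfl

end Spec

section Key

variable (hyp : ℕ → Set X) (e : ℕ → X) (d0 : X) (x : ℕ → X) [Infinite X]

/-- The guess level tends to infinity, on every stream whatsoever. -/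
theorem key (hUUS : ∀ i, (hyp i).Infinite) (he : Function.Surjective e) :
    ∀ k, ∃ T, ∀ t, T ≤ t → k ≤ gx hyp e d0 x t := by
  intro k
  induction k with
  | zero => exact ⟨0, fun t _ => Nat.zero_le _⟩
  | succ k ih =>
    obtain ⟨Tk, hTk⟩ := ih
    by_contra hco
    push_neg at hco
    have hS : ∀ T, ∃ t, T ≤ t ∧ gx hyp e d0 x t = k := by
      intro T
      obtain ⟨t, ht, hlt⟩ := hco (max T Tk)
      exact ⟨t, le_trans (le_max_left _ _) ht,
        le_antisymm (Nat.lt_succ_iff.mp hlt) (hTk t (le_trans (le_max_right _ _) ht))⟩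
    -- each level j < k is eventually decided (qualified forever or unqualified forever)
    have hQdec : ∀ j, ∃ Tj, j < k → (Tk ≤ Tj ∧
        ((∀ t, Tj ≤ t → Qx hyp e d0 x t j) ∨ (∀ t, Tj ≤ t → ¬ Qx hyp e d0 x t j))) := by
      intro j
      by_cases hjk : j < k
      swap
      · exact ⟨0, fun h => absurd h hjk⟩
      have hb : ∀ t, Tk ≤ t → betax hyp e d0 x t j = betax hyp e d0 x Tk j :=
        betax_stab hyp e d0 x (fun s hs => lt_of_lt_of_le hjk (hTk s hs))
      by_cases hc : ∀ t, Consx hyp e d0 x t j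
      · by_cases hcov : ∃ t1, Tk ≤ t1 ∧ Covx hyp e d0 x t1 j
        · obtain ⟨t1, ht1, hcov1⟩ := hcov
          refine ⟨t1, fun _ => ⟨ht1, Or.inl ?_⟩⟩
          intro t ht
          refine ⟨hc t, ?_⟩
          intro m hm hme
          have hm0 : m < betax hyp e d0 x t j := hm
          have hm1 : m < betax hyp e d0 x t1 j := by
            rw [hb t1 ht1]
            rw [hb t (le_trans ht1 ht)] at hm0
            exact hm0
          exact Vx_mono hyp e d0 x ht (hcov1 m hm1 hme)
        · refine ⟨Tk, fun _ => ⟨le_refl _, Or.inr ?_⟩⟩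
          intro t ht hQ
          exact hcov ⟨t, ht, hQ.2⟩
      · push_neg at hc
        obtain ⟨t0, hct0⟩ := hc
        refine ⟨max Tk t0, fun _ => ⟨le_max_left _ _, Or.inr ?_⟩⟩
        intro t ht hQ
        exact hct0 (Consx_anti hyp e d0 x (le_trans (le_max_right _ _) ht) hQ.1)
    choose f hf using hQdec
    set Ts : ℕ := max Tk ((Finset.range k).sup f) with hTsdef
    have hTs_ge : ∀ j, j < k → f j ≤ Ts :=
      fun j hj => le_trans (Finset.le_sup (Finset.mem_range.mpr hj)) (le_max_right _ _)
    have hW : ∀ j, j < k → ∀ t, Ts ≤ t → (Qx hyp e d0 x t j ↔ Qx hyp e d0 x Ts j) := by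
      intro j hj t ht
      rcases (hf j hj).2 with h | h
      · exact iff_of_true (h t (le_trans (hTs_ge j hj) ht)) (h Ts (hTs_ge j hj))
      · exact iff_of_false (h t (le_trans (hTs_ge j hj) ht)) (h Ts (hTs_ge j hj))
    have hWcons : ∀ j, j < k → Qx hyp e d0 x Ts j → ∀ t, Consx hyp e d0 x t j := by
      intro j hj hQ t
      rcases (hf j hj).2 with h | h
      · exact Consx_anti hyp e d0 x (le_max_left t (f j)) (h _ (le_max_right t (f j))).1
      · exact absurd hQ (h Ts (hTs_ge j hj))
    set J : Set X := {a | ∀ j < k, Qx hyp e d0 x Ts j → a ∈ hyp j} with hJ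
    have hIk : ∀ t, Ts ≤ t → Ixx hyp e d0 x t k = J := by
      intro t ht
      ext a
      simp only [mem_Ixx, hJ, Set.mem_setOf_eq]
      constructor
      · intro h j hj hq
        exact h j hj ((hW j hj t ht).mpr hq)
      · intro h j hj hq
        exact h j hj ((hW j hj t ht).mp hq)
    have hQkPin : ∀ t, Ts ≤ t → k + 1 ≤ t → gx hyp e d0 x t = k → Qx hyp e d0 x t k := by
      intro t ht hkt hpin
      by_contra hnq
      have hIeq : Ixx hyp e d0 x t (k+1) = Ixx hyp e d0 x t k := by
        ext a
        simp only [mem_Ixx]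
        constructor
        · intro h j hj hq
          exact h j (Nat.lt_succ_of_lt hj) hq
        · intro h j hj hq
          rcases Nat.lt_succ_iff_lt_or_eq.mp hj with hj' | rfl
          · exact h j hj' hq
          · exact absurd hq hnq
      have hok : okx hyp e d0 x t (k+1) := by
        rw [okx_def, hIeq]
        have h0 := okx_gx hyp e d0 x t
        rw [hpin] at h0
        rwa [okx_def] at h0
      have := le_gx hyp e d0 x hkt hok
      omega
    have hConsk : ∀ t, Consx hyp e d0 x t k := by
      intro t
      obtain ⟨t', ht', hpin⟩ := hS (max (max t Ts) (k+1))
      have h1 : Ts ≤ t' := le_trans (le_trans (le_max_right t Ts) (le_max_left _ _)) ht'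
      have h2 : k+1 ≤ t' := le_trans (le_max_right _ _) ht'
      exact Consx_anti hyp e d0 x
        (le_trans (le_trans (le_max_left t Ts) (le_max_left _ _)) ht')
        (hQkPin t' h1 h2 hpin).1
    have hBk : ∀ N, ∃ t, N ≤ betax hyp e d0 x t k := by
      intro N
      induction N with
      | zero => exact ⟨0, Nat.zero_le _⟩
      | succ N ihN =>
        obtain ⟨t, htN⟩ := ihN
        obtain ⟨s, hs, hpin⟩ := hS t
        refine ⟨s+1, ?_⟩
        have hsub : insert s ((Finset.range t).filter (fun u => (px hyp e d0 x u).1 ≤ k))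
            ⊆ (Finset.range (s+1)).filter (fun u => (px hyp e d0 x u).1 ≤ k) := by
          intro u hu
          rcases Finset.mem_insert.mp hu with rfl | hu
          · exact Finset.mem_filter.mpr ⟨Finset.mem_range.mpr (Nat.lt_succ_self u), le_of_eq hpin⟩
          · obtain ⟨hu1, hu2⟩ := Finset.mem_filter.mp hu
            exact Finset.mem_filter.mpr ⟨Finset.mem_range.mpr
              (lt_of_lt_of_le (Finset.mem_range.mp hu1) (le_trans hs (Nat.le_succ s))), hu2⟩
        have hcard := Finset.card_le_card hsub
        rw [Finset.card_insert_of_notMem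
          (fun hmem => absurd (Finset.mem_range.mp (Finset.mem_filter.mp hmem).1) (not_lt.mpr hs))] at hcard
        unfold betax betaR at htN ⊢
        omega
    have hBk' : ∀ N, ∃ T', ∀ t, T' ≤ t → N ≤ betax hyp e d0 x t k := by
      intro N
      obtain ⟨t, ht⟩ := hBk N
      exact ⟨t, fun t' ht' => le_trans ht (betax_mono hyp e d0 x k ht')⟩
    have hCovk : ∀ w ∈ hyp k, ∃ T2, ∀ t, T2 ≤ t → w ∈ Vx hyp e d0 x t := by
      intro w hw
      obtain ⟨m, rfl⟩ := he w
      obtain ⟨T', hT'⟩ := hBk' (m+1)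
      obtain ⟨t, ht, hpin⟩ := hS (max T' (max Ts (k+1)))
      have hQk := hQkPin t (le_trans (le_trans (le_max_left _ _) (le_max_right _ _)) ht)
        (le_trans (le_trans (le_max_right _ _) (le_max_right _ _)) ht) hpin
      have hcv : e m ∈ Vx hyp e d0 x t :=
        hQk.2 m (lt_of_lt_of_le (Nat.lt_succ_self m) (hT' t (le_trans (le_max_left _ _) ht))) hw
      exact ⟨t, fun t' ht' => Vx_mono hyp e d0 x ht' hcv⟩
    set TT := max Tk Ts with hTTdef
    have hoJ : ∀ t, TT ≤ t → ox hyp e d0 x t ∈ J := by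
      intro t ht
      have h1 := (ox_mem hyp e d0 x t).1
      rw [mem_Ixx] at h1
      intro j hj hq
      have hjg : j < gx hyp e d0 x t :=
        lt_of_lt_of_le hj (hTk t (le_trans (le_max_left _ _) ht))
      exact h1 j hjg ((hW j hj t (le_trans (le_max_right _ _) ht)).mpr hq)
    have hGenJ : ∀ r, ¬ (∃ s, 1 ≤ s ∧ s ≤ r ∧ x r = ox hyp e d0 x s) → x r ∈ J := by
      intro r hr j hj hq
      rcases (hWcons j hj hq (r+1)) r (Nat.lt_succ_self r) with h | h
      · exact h
      · exact absurd h hr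
    obtain ⟨t0, ht0, hpin0⟩ := hS (max TT (k+1))
    have hTs0 : Ts ≤ t0 := le_trans (le_trans (le_max_right Tk Ts) (le_max_left _ _)) ht0
    have hk10 : k+1 ≤ t0 := le_trans (le_max_right _ _) ht0
    have hnotok : ¬ okx hyp e d0 x t0 (k+1) := by
      intro hok
      have := le_gx hyp e d0 x hk10 hok
      omega
    have hsub0 : Ixx hyp e d0 x t0 (k+1) ⊆ Vx hyp e d0 x t0 := by
      rw [okx_def, Set.not_nonempty_iff_eq_empty] at hnotok
      exact Set.diff_eq_empty.mp hnotok
    have hRJ : J ∩ hyp k ⊆ Vx hyp e d0 x t0 := by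
      rintro a ⟨haJ, haK⟩
      refine hsub0 ?_
      rw [mem_Ixx]
      intro j hj hq
      rcases Nat.lt_succ_iff_lt_or_eq.mp hj with hj' | rfl
      · exact haJ j hj' ((hW j hj' t0 hTs0).mp hq)
      · exact haK
    have hmain : hyp k ⊆ Vx hyp e d0 x t0 ∪ (ox hyp e d0 x '' Set.Iio TT) := by
      intro w hw
      obtain ⟨T2, hT2⟩ := hCovk w hw
      have hwV := hT2 (max T2 TT) (le_max_left _ _)
      rcases hwV with ⟨r, _, rfl⟩ | ⟨s, _, rfl⟩
      · by_cases hex : ∃ s, 1 ≤ s ∧ s ≤ r ∧ x r = ox hyp e d0 x s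
        · obtain ⟨s, _, _, hxr⟩ := hex
          rw [hxr]
          rcases lt_or_ge s TT with hsT | hsT
          · exact Or.inr ⟨s, hsT, rfl⟩
          · exact Or.inl (hRJ ⟨hoJ s hsT, by rw [← hxr]; exact hw⟩)
        · exact Or.inl (hRJ ⟨hGenJ r hex, hw⟩)
      · rcases lt_or_ge s TT with hsT | hsT
        · exact Or.inr ⟨s, hsT, rfl⟩
        · exact Or.inl (hRJ ⟨hoJ s hsT, hw⟩)
    exact hUUS k (Set.Finite.subset
      ((Vx_fin hyp e d0 x t0).union ((Set.finite_Iio TT).image _)) hmain)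

end Key

end Statement14


/-- Every countable class H = {h_1, h_2, ...} over a countable domain, with every
support infinite, is generatable in the limit with replay: there is a generator G
such that for every target h* ∈ H and every enumeration with replay for h* and G,
eventually all outputs of G are fresh elements of supp(h*). -/
theorem statement14 {X : Type*} [Countable X] (hyp : ℕ → Set X)
    (hUUS : ∀ i, (hyp i).Infinite) :
    ∃ G : List X → X, ∀ i : ℕ, ∀ x : ℕ → X,
      ReplaySeq (hyp i) G x → (∀ y ∈ hyp i, ∃ t, x t = y) →
      ∃ tstar : ℕ, ∀ s, tstar ≤ s →
        Out G x s ∈ hyp i ∧ ∀ r < s, Out G x s ≠ x r := by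
  classical
  haveI hX : Infinite X := Set.infinite_univ_iff.mp ((hUUS 0).mono (Set.subset_univ _))
  obtain ⟨e, he⟩ := exists_surjective_nat X
  refine ⟨Statement14.GG hyp e (e 0), ?_⟩
  intro i x hRS henum
  set d0 := e 0 with hd0
  have hCons_i : ∀ t, Statement14.Consx hyp e d0 x t i := by
    intro t r _
    refine (hRS r).imp id ?_
    rintro ⟨s, h1, h2, h3⟩
    exact ⟨s, h1, h2, h3.trans (Statement14.Out_eq hyp e d0 x s)⟩
  obtain ⟨T1, hT1⟩ := Statement14.key hyp e d0 x hUUS he (i+1)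
  have hbz : ∀ t, T1 ≤ t →
      Statement14.betax hyp e d0 x t i = Statement14.betax hyp e d0 x T1 i :=
    Statement14.betax_stab hyp e d0 x (fun s hs => hT1 s hs)
  set B := Statement14.betax hyp e d0 x T1 i with hB
  have hcms : ∀ m, ∃ Tm, ∀ t, Tm ≤ t →
      (e m ∈ hyp i → e m ∈ Statement14.Vx hyp e d0 x t) := by
    intro m
    by_cases hmi : e m ∈ hyp i
    · obtain ⟨r, hr⟩ := henum (e m) hmi
      refine ⟨r+1, fun t ht _ => ?_⟩
      exact Statement14.Vx_mono hyp e d0 x ht (Or.inl ⟨r, Nat.lt_succ_self r, hr.symm⟩)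
    · exact ⟨0, fun t _ h => absurd h hmi⟩
  choose fm hfm using hcms
  set T2 := max T1 ((Finset.range B).sup fm) with hT2def
  refine ⟨T2, fun s hs => ?_⟩
  have hT1s : T1 ≤ s := le_trans (le_max_left _ _) hs
  have hQz : Statement14.Qx hyp e d0 x s i := by
    refine ⟨hCons_i s, ?_⟩
    intro m hm hme
    have hmB : m < B := by
      have hm0 : m < Statement14.betax hyp e d0 x s i := hm
      rw [hbz s hT1s] at hm0
      exact hm0
    exact hfm m s (le_trans (le_trans (Finset.le_sup (Finset.mem_range.mpr hmB))
      (le_max_right _ _)) hs) hme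
  have h1 := (Statement14.ox_mem hyp e d0 x s).1
  have h2 := (Statement14.ox_mem hyp e d0 x s).2
  rw [Statement14.mem_Ixx] at h1
  constructor
  · rw [Statement14.Out_eq]
    exact h1 i (lt_of_lt_of_le (Nat.lt_succ_self i) (hT1 s hT1s)) hQz
  · intro r hr
    rw [Statement14.Out_eq]
    intro hcon
    exact h2 (Or.inl ⟨r, hr, hcon⟩)
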